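/- Let x₀ be a nonzero vector in ℝ^{n+1}, let M = x₀⊥ be its orthogonal hyperplane, and let L be a linear subspace of ℝ^{n+1}. Define θ_max as the maximal angle between nonzero vectors of L and nonzero vectors of M, and θ_min as the minimal angle between nonzero vectors of L⊥ and x₀. Then θ_min ≤ θ_max. -/

import Mathlib

open RealInnerProductSpace in
theorem theta_min_le_theta_max (n : ℕ) (hn : 1 ≤ n)
    (x₀ : EuclideanSpace ℝ (Fin (n + 1))) (hx₀ : x₀ ≠ 0)
    (L : Submodule ℝ (EuclideanSpace ℝ (Fin (n + 1))))
    (hL : L ≠ ⊥) (hL' : Lᗮ ≠ ⊥) :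
    sInf {θ : ℝ | ∃ u ∈ Lᗮ, u ≠ 0 ∧
        θ = Real.arccos (|⟪u, x₀⟫| / (‖u‖ * ‖x₀‖))} ≤
      sSup {θ : ℝ | ∃ u ∈ L, u ≠ 0 ∧ ∃ v : EuclideanSpace ℝ (Fin (n + 1)),
        ⟪x₀, v⟫ = 0 ∧ v ≠ 0 ∧
        θ = Real.arccos (|⟪u, v⟫| / (‖u‖ * ‖v‖))} := by
  set S : Set ℝ := {θ : ℝ | ∃ u ∈ Lᗮ, u ≠ 0 ∧
      θ = Real.arccos (|⟪u, x₀⟫| / (‖u‖ * ‖x₀‖))} with hSdef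
  set T : Set ℝ := {θ : ℝ | ∃ u ∈ L, u ≠ 0 ∧ ∃ v : EuclideanSpace ℝ (Fin (n + 1)),
      ⟪x₀, v⟫ = 0 ∧ v ≠ 0 ∧
      θ = Real.arccos (|⟪u, v⟫| / (‖u‖ * ‖v‖))} with hTdef
  have hSb : BddBelow S := by
    refine ⟨0, fun θ hθ => ?_⟩
    obtain ⟨u, -, -, rfl⟩ := hθ
    exact Real.arccos_nonneg _
  have hTb : BddAbove T := by
    refine ⟨Real.pi, fun θ hθ => ?_⟩
    obtain ⟨u, -, -, v, -, -, rfl⟩ := hθ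
    exact Real.arccos_le_pi _
  -- a nonzero vector orthogonal to x₀
  have hMne : ∃ v : EuclideanSpace ℝ (Fin (n + 1)), ⟪x₀, v⟫ = 0 ∧ v ≠ 0 := by
    have hspan : ((ℝ ∙ x₀)ᗮ : Submodule ℝ (EuclideanSpace ℝ (Fin (n + 1)))) ≠ ⊥ := by
      intro h
      have htop : (ℝ ∙ x₀) = ⊤ := Submodule.orthogonal_eq_bot_iff.mp h
      have h1 : Module.finrank ℝ (ℝ ∙ x₀) = 1 := finrank_span_singleton hx₀
      have h2 : Module.finrank ℝ
          (⊤ : Submodule ℝ (EuclideanSpace ℝ (Fin (n + 1)))) = n + 1 := by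
        rw [finrank_top, finrank_euclideanSpace_fin]
      rw [htop, h2] at h1
      omega
    obtain ⟨v, hv, hv0⟩ := Submodule.exists_mem_ne_zero_of_ne_bot hspan
    exact ⟨v, (Submodule.mem_orthogonal _ _).mp hv x₀
      (Submodule.mem_span_singleton_self x₀), hv0⟩
  -- it suffices to find s ∈ S, t ∈ T with s ≤ t
  suffices h : ∃ s ∈ S, ∃ t ∈ T, s ≤ t by
    obtain ⟨s, hs, t, ht, hst⟩ := h
    exact le_trans (csInf_le hSb hs) (le_trans hst (le_csSup hTb ht))
  set p : EuclideanSpace ℝ (Fin (n + 1)) := ((Submodule.orthogonalProjectionOnto L x₀ : L) : EuclideanSpace ℝ (Fin (n + 1))) with hp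
  set q : EuclideanSpace ℝ (Fin (n + 1)) := x₀ - p with hqdef
  have hpL : p ∈ L := (Submodule.orthogonalProjectionOnto L x₀).2
  have hqL : q ∈ Lᗮ := Submodule.sub_starProjection_mem_orthogonal (K := L) x₀
  have hx : x₀ = p + q := by rw [hqdef]; abel
  have hpq : ⟪p, q⟫ = 0 := (Submodule.mem_orthogonal _ _).mp hqL p hpL
  have hqp : ⟪q, p⟫ = 0 := by rw [real_inner_comm]; exact hpq
  by_cases hq0 : q = 0
  · -- x₀ ∈ L; both π/2
    obtain ⟨u, huL, hu0⟩ := Submodule.exists_mem_ne_zero_of_ne_bot hL'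
    obtain ⟨v, hv, hv0⟩ := hMne
    have hxL : x₀ ∈ L := by rw [hx, hq0, add_zero]; exact hpL
    have hux : ⟪u, x₀⟫ = 0 := by
      have := (Submodule.mem_orthogonal _ _).mp huL x₀ hxL
      rw [real_inner_comm]; exact this
    refine ⟨_, ⟨u, huL, hu0, rfl⟩, _, ⟨x₀, hxL, hx₀, v, hv, hv0, rfl⟩, ?_⟩
    rw [hux, hv]
    simp
  · by_cases hp0 : p = 0
    · -- x₀ ∈ Lᗮ; s = 0
      obtain ⟨u, huL, hu0⟩ := Submodule.exists_mem_ne_zero_of_ne_bot hL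
      obtain ⟨v, hv, hv0⟩ := hMne
      have hxq : x₀ ∈ Lᗮ := by rwa [hx, hp0, zero_add]
      refine ⟨_, ⟨x₀, hxq, hx₀, rfl⟩, _, ⟨u, huL, hu0, v, hv, hv0, rfl⟩, ?_⟩
      have : |⟪x₀, x₀⟫| / (‖x₀‖ * ‖x₀‖) = 1 := by
        rw [real_inner_self_eq_norm_sq]
        have h0 : ‖x₀‖ ≠ 0 := norm_ne_zero_iff.mpr hx₀
        rw [abs_of_nonneg (by positivity)]
        field_simp
      rw [this, Real.arccos_one]
      exact Real.arccos_nonneg _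
    · -- generic case
      set v : EuclideanSpace ℝ (Fin (n + 1)) := ‖p‖ ^ 2 • q - ‖q‖ ^ 2 • p with hvdef
      have hnp : (0:ℝ) < ‖p‖ := norm_pos_iff.mpr hp0
      have hnq : (0:ℝ) < ‖q‖ := norm_pos_iff.mpr hq0
      have hnx : (0:ℝ) < ‖x₀‖ := norm_pos_iff.mpr hx₀
      have hxv : ⟪x₀, v⟫ = 0 := by
        rw [hx, hvdef, inner_add_left, inner_sub_right, inner_sub_right,
          real_inner_smul_right, real_inner_smul_right, real_inner_smul_right,
          real_inner_smul_right, hpq, hqp, real_inner_self_eq_norm_sq,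
          real_inner_self_eq_norm_sq]
        ring
      have hqv : ⟪q, v⟫ = ‖p‖ ^ 2 * ‖q‖ ^ 2 := by
        rw [hvdef, inner_sub_right, real_inner_smul_right, real_inner_smul_right,
          hqp, real_inner_self_eq_norm_sq]
        ring
      have hv0 : v ≠ 0 := by
        intro h
        rw [h, inner_zero_right] at hqv
        have hpos : (0:ℝ) < ‖p‖ ^ 2 * ‖q‖ ^ 2 := by positivity
        linarith
      have hpv : ⟪p, v⟫ = -(‖q‖ ^ 2 * ‖p‖ ^ 2) := by
        rw [hvdef, inner_sub_right, real_inner_smul_right, real_inner_smul_right,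
          hpq, real_inner_self_eq_norm_sq]
        ring
      have hxnorm : ‖x₀‖ ^ 2 = ‖p‖ ^ 2 + ‖q‖ ^ 2 := by
        rw [hx, norm_add_sq_real, hpq]; ring
      have hvnorm : ‖v‖ = ‖p‖ * ‖q‖ * ‖x₀‖ := by
        have h2 : ‖v‖ ^ 2 = (‖p‖ * ‖q‖ * ‖x₀‖) ^ 2 := by
          rw [← real_inner_self_eq_norm_sq, hvdef]
          simp only [inner_sub_left, inner_sub_right, real_inner_smul_left,
            real_inner_smul_right, hpq, hqp]
          simp only [real_inner_self_eq_norm_sq]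
          linear_combination (-(‖p‖ ^ 2 * ‖q‖ ^ 2)) * hxnorm
        nlinarith [norm_nonneg v, mul_pos (mul_pos hnp hnq) hnx]
      have hqx : ⟪q, x₀⟫ = ‖q‖ ^ 2 := by
        rw [hx, inner_add_right, hqp, real_inner_self_eq_norm_sq]; ring
      refine ⟨_, ⟨q, hqL, hq0, rfl⟩, _, ⟨p, hpL, hp0, v, hxv, hv0, rfl⟩, le_of_eq ?_⟩
      congr 1
      rw [hqx, hpv, hvnorm, abs_of_nonneg (by positivity), abs_neg,
        abs_of_nonneg (by positivity)]
      field_simp
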